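/- Let A₀ = (E+F)/2 be the midpoint of EF, D₀ = (B+C)/2 the midpoint of BC, and A₃' = T_{P'}(D). Then the four lines A₀P, D₀Q', DQ, and A₃'P' are concurrent at the point λ⁻¹(A) = T_P(T_{P'}⁻¹(A)): that is, the point Z₀ := T_P(T_{P'}⁻¹(A)) is collinear with each of the pairs (A₀, P), (D₀, Q'), (D, Q), and (A₃', P'). -/

import Mathlib

set_option maxHeartbeats 2000000 in
noncomputable section

abbrev Pt := EuclideanSpace ℝ (Fin 2)

lemma aff3 (f : Pt ≃ᵃ[ℝ] Pt) (a b c : ℝ) (h : a + b + c = 1) (A B C : Pt) :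
    f (a • A + b • B + c • C) = a • f A + b • f B + c • f C := by
  have h1 : a • A + b • B + c • C = (b • (B -ᵥ A) + c • (C -ᵥ A)) +ᵥ A := by
    have ha : a = 1 - b - c := by linarith
    subst ha
    rw [vsub_eq_sub, vsub_eq_sub, vadd_eq_add]; module
  rw [h1, f.map_vadd, map_add, map_smul, map_smul]
  have h2 : ∀ x y : Pt, f.linear (x -ᵥ y) = f x -ᵥ f y := by
    intro x y
    simpa using f.toAffineMap.linearMap_vsub x y
  rw [h2, h2, vsub_eq_sub, vsub_eq_sub, vadd_eq_add]
  have ha : a = 1 - b - c := by linarith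
  subst ha; module

lemma collinear_triple (t : ℝ) (x y z : Pt) (h : x = AffineMap.lineMap y z t) :
    Collinear ℝ ({x, y, z} : Set Pt) := by
  rw [h]
  exact collinear_insert_of_mem_affineSpan_pair (AffineMap.lineMap_mem_affineSpan_pair _ _ _)

lemma mid_eq (x y : Pt) : midpoint ℝ x y = (2:ℝ)⁻¹ • x + (2:ℝ)⁻¹ • y := by
  rw [midpoint_eq_smul_add, invOf_eq_inv, smul_add]

theorem stmt14
    (A B C : Pt) (hABC : AffineIndependent ℝ ![A, B, C])
    (α β γ : ℝ) (hsum : α + β + γ = 1)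
    (hα : α ≠ 0) (hβ : β ≠ 0) (hγ : γ ≠ 0)
    (hβγ : β + γ ≠ 0) (hγα : γ + α ≠ 0) (hαβ : α + β ≠ 0)
    (hab : α ≠ β) (hbc : β ≠ γ) (hca : γ ≠ α)
    (hs : α * β + β * γ + γ * α ≠ 0)
    (G : Pt) (hG : G = (3:ℝ)⁻¹ • (A + B + C))
    (P : Pt) (hP : P = α • A + β • B + γ • C)
    (P' : Pt)
    (hP'' : P' = (α * β + β * γ + γ * α)⁻¹ • ((β * γ) • A + (γ * α) • B + (α * β) • C))
    (Q : Pt) (hQ : Q = G - (2:ℝ)⁻¹ • (P' - G))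
    (Q' : Pt) (hQ' : Q' = G - (2:ℝ)⁻¹ • (P - G))
    (D E F : Pt)
    (hD : D = (β + γ)⁻¹ • (β • B + γ • C))
    (hE : E = (γ + α)⁻¹ • (α • A + γ • C))
    (hF : F = (α + β)⁻¹ • (α • A + β • B))
    (D₃ E₃ F₃ : Pt)
    (hD₃ : D₃ = (β + γ)⁻¹ • (γ • B + β • C))
    (hE₃ : E₃ = (γ + α)⁻¹ • (γ • A + α • C))
    (hF₃ : F₃ = (α + β)⁻¹ • (β • A + α • B))
    (TP : Pt ≃ᵃ[ℝ] Pt) (hTPA : TP A = D) (hTPB : TP B = E) (hTPC : TP C = F)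
    (TP' : Pt ≃ᵃ[ℝ] Pt) (hTP'A : TP' A = D₃) (hTP'B : TP' B = E₃) (hTP'C : TP' C = F₃)

    (A₀ : Pt) (hA₀ : A₀ = midpoint ℝ E F)
    (D₀ : Pt) (hD₀ : D₀ = midpoint ℝ B C)
    (A₃' : Pt) (hA₃' : A₃' = TP' D) :
    Collinear ℝ ({TP (TP'.symm A), A₀, P} : Set Pt) ∧
    Collinear ℝ ({TP (TP'.symm A), D₀, Q'} : Set Pt) ∧
    Collinear ℝ ({TP (TP'.symm A), D, Q} : Set Pt) ∧
    Collinear ℝ ({TP (TP'.symm A), A₃', P'} : Set Pt) := by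
  have hα1 : α = 1 - β - γ := by linarith
  subst hα1
  subst hG hP hP'' hQ hQ' hD hE hF hD₃ hE₃ hF₃ hA₀ hD₀ hA₃'
  have h1β : (1:ℝ) - β ≠ 0 := fun h => hγα (by linarith)
  have h1γ : (1:ℝ) - γ ≠ 0 := fun h => hαβ (by linarith)
  set a : ℝ := -((1 - β - γ) * (β + γ)) / (2 * β * γ) with ha
  set b : ℝ := (1 - β) / (2 * γ) with hb
  set c : ℝ := (1 - γ) / (2 * β) with hc
  have habc : a + b + c = 1 := by
    rw [ha, hb, hc]; field_simp; ring
  have hX : TP'.symm A = a • A + b • B + c • C := by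
    apply TP'.injective
    rw [AffineEquiv.apply_symm_apply, aff3 TP' a b c habc A B C, hTP'A, hTP'B, hTP'C,
      ha, hb, hc]
    match_scalars <;> field_simp <;> ring
  have hZ : TP (TP'.symm A) =
      (((1 - β - γ) * (β + γ)) / (2 * β * γ)) • A + ((γ - (1 - β - γ)) / (2 * γ)) • B
        + ((β - (1 - β - γ)) / (2 * β)) • C := by
    rw [hX, aff3 TP a b c habc A B C, hTPA, hTPB, hTPC, ha, hb, hc]
    match_scalars <;> field_simp <;> ring
  rw [hZ]
  refine ⟨?_, ?_, ?_, ?_⟩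
  · refine collinear_triple (-(1 - β - γ) / (β * γ)) _ _ _ ?_
    rw [AffineMap.lineMap_apply_module, mid_eq]
    match_scalars <;> field_simp <;> ring
  · refine collinear_triple ((1 - β - γ) / (β * γ)) _ _ _ ?_
    rw [AffineMap.lineMap_apply_module, mid_eq]
    match_scalars <;> field_simp <;> ring
  · refine collinear_triple (((1 - β - γ) * β + β * γ + γ * (1 - β - γ)) / (β * γ)) _ _ _ ?_
    rw [AffineMap.lineMap_apply_module]
    generalize hsd : (1 - β - γ) * β + β * γ + γ * (1 - β - γ) = s at hs ⊢
    match_scalars <;> field_simp <;> (subst hsd; ring)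
  · refine collinear_triple
      (-((-β^2*γ^3 - β^3*γ^2 - (1-β-γ)*β^2*γ^2 + (1-β-γ)*β^3*γ + (1-β-γ)^2*γ^3
          + (1-β-γ)^2*β*γ^2 + 2*(1-β-γ)^2*β^2*γ + (1-β-γ)^3*γ^2 + (1-β-γ)^3*β*γ)
        * ((1 - β - γ) * β + β * γ + γ * (1 - β - γ)))
        / (2 * (1-β-γ) * β^2 * γ^3 * ((1-β-γ) + β))) _ _ _ ?_
    have hA3 : TP' ((β + γ)⁻¹ • (β • B + γ • C)) =
        (0:ℝ) • ((β + γ)⁻¹ • (γ • B + β • C))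
          + ((β + γ)⁻¹ * β) • ((γ + (1 - β - γ))⁻¹ • (γ • A + (1 - β - γ) • C))
          + ((β + γ)⁻¹ * γ) • (((1 - β - γ) + β)⁻¹ • (β • A + (1 - β - γ) • B)) := by
      rw [show (β + γ)⁻¹ • (β • B + γ • C)
            = (0:ℝ) • A + ((β + γ)⁻¹ * β) • B + ((β + γ)⁻¹ * γ) • C by
          match_scalars <;> field_simp,
        aff3 TP' 0 ((β + γ)⁻¹ * β) ((β + γ)⁻¹ * γ) (by field_simp; ring) A B C,
        hTP'A, hTP'B, hTP'C]
    rw [hA3, AffineMap.lineMap_apply_module]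
    generalize hsd : (1 - β - γ) * β + β * γ + γ * (1 - β - γ) = s at hs ⊢
    match_scalars <;> field_simp <;> (subst hsd; ring)
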